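/- Let R be a Noetherian ring of prime characteristic p with nilradical 𝔑, and suppose 𝔑^[q'] = 0. Let P₁,…,P_r be the absolutely minimal primes, and for each i choose dᵢ ∉ Pᵢ lying in every other minimal prime. If x ∈ R, I an ideal, and for each i the image of x in R/Pᵢ lies in (I·R/Pᵢ)^★, then x ∈ I^★ in R. -/

import Mathlib

/-- The `q`-th Frobenius power of an ideal: the ideal generated by `q`-th powers of elements. -/
def Ideal.frobPow {R : Type*} [CommRing R] (I : Ideal R) (q : ℕ) : Ideal R :=
  Ideal.span ((fun a => a ^ q) '' (I : Set R))

/-- `R°`: the complement of the union of the minimal primes of `R`. -/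
def tightMultipliers (R : Type*) [CommRing R] : Set R :=
  {c | ∀ P ∈ minimalPrimes R, c ∉ P}

/-- The tight closure of an ideal `I` in a ring of characteristic `p`. -/
def tightClosure {R : Type*} [CommRing R] (p : ℕ) (I : Ideal R) : Set R :=
  {x | ∃ c ∈ tightMultipliers R, ∃ q₀ : ℕ, ∀ e : ℕ, q₀ ≤ p ^ e →
    c * x ^ p ^ e ∈ I.frobPow (p ^ e)}

/-- A minimal prime `P` is absolutely minimal if `dim R/P = dim R`. -/
def IsAbsolutelyMinimal {R : Type*} [CommRing R] (P : Ideal R) : Prop :=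
  P ∈ minimalPrimes R ∧ ringKrullDim (R ⧸ P) = ringKrullDim R

/-- `R^•`: the complement of the union of the absolutely minimal primes of `R`. -/
def neMultipliers (R : Type*) [CommRing R] : Set R :=
  {c | ∀ P : Ideal R, IsAbsolutelyMinimal P → c ∉ P}

/-- The NE closure of an ideal `I` in a ring of characteristic `p`. -/
def neClosure {R : Type*} [CommRing R] (p : ℕ) (I : Ideal R) : Set R :=
  {x | ∃ c ∈ neMultipliers R, ∃ q₀ : ℕ, ∀ e : ℕ, q₀ ≤ p ^ e →
    c * x ^ p ^ e ∈ I.frobPow (p ^ e)}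

/-- A system of parameters for a Noetherian local ring: `dim R` elements generating an
ideal primary to the maximal ideal. -/
def IsSOP {R : Type*} [CommRing R] [IsLocalRing R] {n : ℕ} (x : Fin n → R) : Prop :=
  ringKrullDim R = n ∧
    (Ideal.span (Set.range x)).radical = IsLocalRing.maximalIdeal R

/-- A Noetherian local ring is Cohen–Macaulay iff some system of parameters is a
regular sequence. -/
def IsCohenMacaulayLocal (R : Type*) [CommRing R] [IsLocalRing R] : Prop :=
  ∃ (n : ℕ) (x : Fin n → R), IsSOP x ∧ RingTheory.Sequence.IsRegular R (List.ofFn x)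

section Aux

variable {R : Type*} [CommRing R]

lemma aux_pow_mem_frobPow {I : Ideal R} {a : R} (ha : a ∈ I) (q : ℕ) :
    a ^ q ∈ I.frobPow q :=
  Ideal.subset_span ⟨a, ha, rfl⟩

lemma aux_frobPow_map_le {S : Type*} [CommRing S] (f : R →+* S)
    (hf : Function.Surjective f) (I : Ideal R) (q : ℕ) :
    (I.map f).frobPow q ≤ (I.frobPow q).map f := by
  rw [Ideal.frobPow, Ideal.span_le]
  rintro _ ⟨a, ha, rfl⟩
  obtain ⟨b, hb, rfl⟩ := (Ideal.mem_map_iff_of_surjective f hf).mp ha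
  show f b ^ q ∈ _
  rw [← map_pow]
  exact Ideal.mem_map_of_mem f (aux_pow_mem_frobPow hb q)

lemma aux_frobPow_pow (p : ℕ) [ExpChar R p] (I : Ideal R) (q n : ℕ) {z : R}
    (hz : z ∈ I.frobPow q) : z ^ p ^ n ∈ I.frobPow (q * p ^ n) := by
  have h2 : iterateFrobenius R p n z ∈ (I.frobPow q).map (iterateFrobenius R p n) :=
    Ideal.mem_map_of_mem _ hz
  have h3 : (I.frobPow q).map (iterateFrobenius R p n) ≤ I.frobPow (q * p ^ n) := by
    rw [Ideal.frobPow, Ideal.map_span, Ideal.span_le]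
    rintro _ ⟨_, ⟨a, ha, rfl⟩, rfl⟩
    exact Ideal.subset_span ⟨a, ha, by rw [iterateFrobenius_def, ← pow_mul]⟩
  rw [show z ^ p ^ n = iterateFrobenius R p n z from rfl]
  exact h3 h2

end Aux

theorem stmt_15 {R : Type*} [CommRing R] [IsNoetherianRing R]
    [ConnectedSpace (PrimeSpectrum R)] (p : ℕ) (hp : p.Prime) [CharP R p]
    (q' : ℕ) (hnil : (nilradical R).frobPow q' = ⊥)
    (r : ℕ) (P : Fin r → Ideal R) (hPinj : Function.Injective P)
    (hPall : ∀ J : Ideal R, IsAbsolutelyMinimal J ↔ ∃ i, J = P i)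
    (d : Fin r → R) (hd1 : ∀ i, d i ∉ P i)
    (hd2 : ∀ i, ∀ Q ∈ minimalPrimes R, Q ≠ P i → d i ∈ Q)
    (I : Ideal R) (x : R)
    (hx : ∀ i, Ideal.Quotient.mk (P i) x ∈
      neClosure p (I.map (Ideal.Quotient.mk (P i)))) :
    x ∈ neClosure p I := by
  haveI : ExpChar R p := .prime hp
  have hPam : ∀ i, IsAbsolutelyMinimal (P i) := fun i => (hPall _).mpr ⟨i, rfl⟩
  have hPmin : ∀ i, P i ∈ minimalPrimes R := fun i => (hPam i).1
  have hPprime : ∀ i, (P i).IsPrime := fun i => (hPmin i).1.1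
  -- the zero ideal of `R ⧸ P i` is absolutely minimal
  have hbotam : ∀ i, IsAbsolutelyMinimal (⊥ : Ideal (R ⧸ P i)) := by
    intro i
    haveI := hPprime i
    refine ⟨⟨⟨Ideal.bot_prime, bot_le⟩, fun J _ _ => bot_le⟩, ?_⟩
    exact ringKrullDim_eq_of_ringEquiv (RingEquiv.quotientBot _)
  -- extract the data of the hypotheses
  choose cb hcb q₀ hq₀ using hx
  choose c hc using fun i => Ideal.Quotient.mk_surjective (cb i)
  have hcP : ∀ i, c i ∉ P i := by
    intro i hci
    exact hcb i ⊥ (hbotam i) (by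
      rw [Ideal.mem_bot, ← hc i, Ideal.Quotient.eq_zero_iff_mem]; exact hci)
  set Q' : ℕ := p ^ q' with hQ'def
  have hq'Q' : q' ≤ Q' := (Nat.lt_pow_self hp.one_lt : q' < p ^ q').le
  set M : ℕ := Finset.univ.sup q₀ with hMdef
  set cf : R := ∑ i, (d i * c i) ^ Q' with hcf
  -- `cf` is an NE multiplier
  have hcfne : cf ∈ neMultipliers R := by
    intro J hJ hmem
    obtain ⟨j, rfl⟩ := (hPall J).mp hJ
    haveI := hPprime j
    have hothers : ∀ i ∈ Finset.univ.erase j, (d i * c i) ^ Q' ∈ P j := by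
      intro i hi
      have hij : P j ≠ P i := fun h => (Finset.mem_erase.mp hi).1 (hPinj h).symm
      exact Ideal.pow_mem_of_mem _ (Ideal.mul_mem_right _ _
        (hd2 i (P j) (hPmin j) hij)) _ (pow_pos hp.pos q')
    have hsum : ∑ i ∈ Finset.univ.erase j, (d i * c i) ^ Q' ∈ P j :=
      Ideal.sum_mem _ hothers
    have hj : (d j * c j) ^ Q' ∈ P j := by
      have := (Finset.add_sum_erase Finset.univ (fun i => (d i * c i) ^ Q')
        (Finset.mem_univ j))
      rw [hcf, ← this] at hmem
      have : (d j * c j) ^ Q' =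
          ((d j * c j) ^ Q' + ∑ i ∈ Finset.univ.erase j, (d i * c i) ^ Q') -
            ∑ i ∈ Finset.univ.erase j, (d i * c i) ^ Q' := by ring
      rw [this]
      exact Ideal.sub_mem _ hmem hsum
    have := (hPprime j).mem_of_pow_mem _ hj
    rcases (hPprime j).mem_or_mem this with h | h
    · exact hd1 j h
    · exact hcP j h
  refine ⟨cf, hcfne, Q' * (M + 1), ?_⟩
  intro e he
  -- split the exponent
  have heq' : q' ≤ e := by
    refine (Nat.pow_le_pow_iff_right hp.one_lt).mp (le_trans ?_ he)
    exact Nat.le_mul_of_pos_right _ (Nat.succ_pos M)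
  set f : ℕ := e - q' with hfdef
  have hef : e = q' + f := (Nat.add_sub_cancel' heq').symm
  have hpe : p ^ e = Q' * p ^ f := by rw [hef, pow_add]
  have hMf : M + 1 ≤ p ^ f := by
    rw [hpe] at he
    exact Nat.le_of_mul_le_mul_left he (pow_pos hp.pos q')
  -- termwise membership
  rw [hcf, Finset.sum_mul]
  refine Ideal.sum_mem _ (fun i _ => ?_)
  haveI := hPprime i
  -- get the decomposition `c i * x ^ p ^ f = z + y`
  have h1 : cb i * (Ideal.Quotient.mk (P i) x) ^ p ^ f ∈
      (I.map (Ideal.Quotient.mk (P i))).frobPow (p ^ f) :=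
    hq₀ i f (le_trans (le_trans (Finset.le_sup (Finset.mem_univ i)) (Nat.le_succ M)) hMf)
  have h2 := aux_frobPow_map_le (Ideal.Quotient.mk (P i))
    Ideal.Quotient.mk_surjective I (p ^ f) h1
  rw [← hc i, ← map_pow, ← map_mul] at h2
  obtain ⟨z, hz, hzeq⟩ := (Ideal.mem_map_iff_of_surjective _
    Ideal.Quotient.mk_surjective).mp h2
  have hy : c i * x ^ p ^ f - z ∈ P i := by
    rw [← Ideal.Quotient.mk_eq_mk_iff_sub_mem]
    exact hzeq.symm
  set y : R := c i * x ^ p ^ f - z with hydef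
  have hdecomp : c i * x ^ p ^ f = z + y := by rw [hydef]; ring
  -- `d i * y` is nilpotent with `(d i * y) ^ q' = 0`
  have hnilmem : d i * y ∈ nilradical R := by
    rw [nilradical_eq_sInf, Submodule.mem_sInf]
    intro J hJ
    haveI : Ideal.IsPrime J := hJ
    obtain ⟨Q, hQ, hQle⟩ := Ideal.exists_minimalPrimes_le (bot_le : ⊥ ≤ J)
    have hQmin : Q ∈ minimalPrimes R := hQ
    by_cases hQP : Q = P i
    · exact hQle (hQP ▸ (Ideal.mul_mem_left _ _ (hQP ▸ hy)))
    · exact hQle (Ideal.mul_mem_right _ _ (hd2 i Q hQmin hQP))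
  have hzero : (d i * y) ^ q' = 0 := by
    have : (d i * y) ^ q' ∈ (nilradical R).frobPow q' :=
      aux_pow_mem_frobPow hnilmem q'
    rwa [hnil, Ideal.mem_bot] at this
  have hzeroQ' : (d i * y) ^ Q' = 0 := by
    rw [← Nat.add_sub_cancel' hq'Q', pow_add, hzero, zero_mul]
  -- conclude
  have hx_eq : (d i * c i) ^ Q' * x ^ p ^ e = (d i) ^ Q' * z ^ Q' := by
    have : (d i * c i) ^ Q' * x ^ p ^ e = (d i * (c i * x ^ p ^ f)) ^ Q' := by
      rw [hpe, mul_comm Q' (p ^ f), pow_mul]; ring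
    rw [this, hdecomp, mul_add, hQ'def, add_pow_expChar_pow, ← hQ'def,
      hzeroQ', add_zero, mul_pow]
  rw [hx_eq, hpe, mul_comm Q' (p ^ f), hQ'def]
  exact Ideal.mul_mem_left _ _ (aux_frobPow_pow p I (p ^ f) q' hz)
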